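/- Let (V, ω) be a real symplectic vector space and R ∈ 𝓡(V) an algebraic symplectic curvature tensor. If q is an odd natural number, then the Chern generator c_q(R) is the zero 2q-form on V; consequently, every Chern 2q-form of R with q odd vanishes. -/

import Mathlib

noncomputable section

variable {V : Type*} [AddCommGroup V] [Module ℝ V]

/-- Product R̂(x₁,x₂) ∘ R̂(x₃,x₄) ∘ ⋯ of endomorphisms read off from a list of
vectors, taken in consecutive pairs. -/
def endProdA (Rhat : V →ₗ[ℝ] V →ₗ[ℝ] Module.End ℝ V) : List V → Module.End ℝ V
  | [] => 1
  | [_] => 1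
  | c :: w :: rest => Rhat c w * endProdA Rhat rest

/-- Pre-Chern form attached to a list of degrees `l = [q₁, …, q_s]`: the product of
the traces tr(R̂ ∘ ⋯ ∘ R̂) over consecutive blocks of 2q₁, 2q₂, … vectors.
Its alternatization is (up to a nonzero constant) the Chern form c_{q₁} ∧ ⋯ ∧ c_{q_s}. -/
def preChernA (Rhat : V →ₗ[ℝ] V →ₗ[ℝ] Module.End ℝ V) : List ℕ → List V → ℝ
  | [], _ => 1
  | a :: rest, xs =>
      LinearMap.trace ℝ V (endProdA Rhat (xs.take (2 * a))) *
        preChernA Rhat rest (xs.drop (2 * a))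

set_option linter.unusedSectionVars false

namespace S3


variable {V : Type*} [AddCommGroup V] [Module ℝ V]


def pairRev {α : Type*} : List α → List α
  | [] => []
  | [x] => [x]
  | c :: w :: rest => pairRev rest ++ [c, w]

theorem pairRev_length {α : Type*} (xs : List α) : (pairRev xs).length = xs.length := by
  induction xs using pairRev.induct <;> simp [pairRev, *]

theorem endProdA_append_pair (Rhat : V →ₗ[ℝ] V →ₗ[ℝ] Module.End ℝ V) (c w : V) :
    ∀ (n : ℕ) (xs : List V), xs.length = 2 * n →
      endProdA Rhat (xs ++ [c, w]) = endProdA Rhat xs * Rhat c w := by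
  intro n
  induction n with
  | zero => rintro (_ | ⟨x, _ | ⟨y, rest⟩⟩) h
            · simp [endProdA]
            · simp only [List.length_singleton] at h; omega
            · simp only [List.length_cons] at h; omega
  | succ n ih =>
      rintro (_ | ⟨x, _ | ⟨y, rest⟩⟩) h
      · simp only [List.length_nil] at h; omega
      · simp only [List.length_singleton] at h; omega
      · simp only [List.cons_append, endProdA, List.append_eq]
        rw [ih rest (by simp only [List.length_cons] at h; omega), mul_assoc]

def Tω (e : V ≃ₗ[ℝ] Module.Dual ℝ V) (B : Module.End ℝ V) : Module.End ℝ V :=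
  e.symm.conj (Module.Dual.transpose (R := ℝ) B)

theorem Tω_mul (e : V ≃ₗ[ℝ] Module.Dual ℝ V) (B C : Module.End ℝ V) :
    Tω e (B * C) = Tω e C * Tω e B := by
  simp only [Tω, Module.End.mul_eq_comp, Module.Dual.transpose_comp, LinearEquiv.conj_comp]

theorem Tω_one (e : V ≃ₗ[ℝ] Module.Dual ℝ V) : Tω e 1 = 1 := by
  apply LinearMap.ext; intro x
  simp only [Tω, LinearEquiv.conj_apply, Module.Dual.transpose_apply,
    LinearMap.coe_comp, Function.comp_apply, LinearEquiv.coe_coe, Module.End.one_apply,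
    Module.End.one_eq_id, LinearMap.comp_id]
  exact e.symm_apply_apply x

theorem Tω_smul (e : V ≃ₗ[ℝ] Module.Dual ℝ V) (c : ℝ) (B : Module.End ℝ V) :
    Tω e (c • B) = c • Tω e B := by
  simp only [Tω, map_smul]

theorem Tω_trace [FiniteDimensional ℝ V] (e : V ≃ₗ[ℝ] Module.Dual ℝ V)
    (B : Module.End ℝ V) :
    LinearMap.trace ℝ V (Tω e B) = LinearMap.trace ℝ V B := by
  rw [Tω, LinearMap.trace_conj', LinearMap.trace_transpose']

theorem Tω_endProdA (e : V ≃ₗ[ℝ] Module.Dual ℝ V)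
    (Rhat : V →ₗ[ℝ] V →ₗ[ℝ] Module.End ℝ V)
    (hA : ∀ z w, Tω e (Rhat z w) = - Rhat z w) :
    ∀ (n : ℕ) (xs : List V), xs.length = 2 * n →
      Tω e (endProdA Rhat xs) = ((-1 : ℝ)) ^ n • endProdA Rhat (pairRev xs) := by
  intro n
  induction n with
  | zero => rintro (_ | ⟨x, _ | ⟨y, rest⟩⟩) h
            · simp [endProdA, pairRev, Tω_one]
            · simp only [List.length_singleton] at h; omega
            · simp only [List.length_cons] at h; omega
  | succ n ih =>
      rintro (_ | ⟨x, _ | ⟨y, rest⟩⟩) h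
      · simp only [List.length_nil] at h; omega
      · simp only [List.length_singleton] at h; omega
      · have hrest : rest.length = 2 * n := by simp only [List.length_cons] at h; omega
        simp only [endProdA, pairRev]
        rw [Tω_mul, ih rest hrest, hA,
          endProdA_append_pair Rhat x y n (pairRev rest) (by rw [pairRev_length, hrest])]
        rw [smul_mul_assoc, mul_neg, smul_neg, pow_succ, mul_neg_one, neg_smul]

theorem trace_endProdA_pairRev [FiniteDimensional ℝ V] (e : V ≃ₗ[ℝ] Module.Dual ℝ V)
    (Rhat : V →ₗ[ℝ] V →ₗ[ℝ] Module.End ℝ V)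
    (hA : ∀ z w, Tω e (Rhat z w) = - Rhat z w)
    (n : ℕ) (xs : List V) (h : xs.length = 2 * n) :
    LinearMap.trace ℝ V (endProdA Rhat (pairRev xs)) =
      ((-1 : ℝ)) ^ n * LinearMap.trace ℝ V (endProdA Rhat xs) := by
  have := Tω_trace e (endProdA Rhat xs)
  rw [Tω_endProdA e Rhat hA n xs h, map_smul, smul_eq_mul] at this
  have h2 : ((-1:ℝ))^n * ((-1:ℝ))^n = 1 := by
    rw [← pow_add, Even.neg_one_pow ⟨n, rfl⟩]
  rw [← this, ← mul_assoc, h2, one_mul]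



theorem preChernA_append (Rhat : V →ₗ[ℝ] V →ₗ[ℝ] Module.End ℝ V) :
    ∀ (l₁ l₂ : List ℕ) (xs : List V),
      preChernA Rhat (l₁ ++ l₂) xs =
        preChernA Rhat l₁ (xs.take (2 * l₁.sum)) * preChernA Rhat l₂ (xs.drop (2 * l₁.sum)) := by
  intro l₁
  induction l₁ with
  | nil => intro l₂ xs; simp [preChernA]
  | cons a t ih =>
      intro l₂ xs
      simp only [List.cons_append, preChernA, List.sum_cons, List.append_eq]
      rw [ih l₂ (xs.drop (2 * a))]
      rw [List.take_take, List.drop_take, List.drop_drop]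
      have h1 : 2 * a ⊓ (2 * (a + t.sum)) = 2 * a := by omega
      have h2 : 2 * (a + t.sum) - 2 * a = 2 * t.sum := by omega
      have h3 : 2 * a + 2 * t.sum = 2 * (a + t.sum) := by omega
      rw [h1, h2, h3, mul_assoc]

theorem pairRev_getElem {α : Type*} :
    ∀ (xs : List α), xs.length % 2 = 0 → ∀ (j : ℕ) (hj : j < xs.length),
      (pairRev xs)[j]'(by rw [pairRev_length]; exact hj) =
        xs[xs.length - 2 - 2 * (j / 2) + j % 2]'(by omega) := by
  intro xs
  induction xs using pairRev.induct with
  | case1 => intro _ j hj; simp at hj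
  | case2 x => intro h; simp at h
  | case3 c w rest ih =>
      intro h j hj
      simp only [List.length_cons] at hj h ⊢
      have hr : rest.length % 2 = 0 := by omega
      simp only [pairRev]
      rw [List.getElem_append]
      split_ifs with hlt
      · rw [pairRev_length] at hlt
        have hidx : rest.length + 1 + 1 - 2 - 2 * (j / 2) + j % 2
            = (rest.length - 2 - 2 * (j / 2) + j % 2) + 1 + 1 := by omega
        simp only [hidx, List.getElem_cons_succ]
        exact ih hr j hlt
      · rw [pairRev_length] at hlt
        have hj2 : j = rest.length ∨ j = rest.length + 1 := by omega
        rcases hj2 with hj2 | hj2 <;> subst hj2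
        · have h0 : rest.length - (pairRev rest).length = 0 := by
            rw [pairRev_length]; omega
          have hi : rest.length - 2 * (rest.length / 2) + rest.length % 2 = 0 := by omega
          have hi2 : rest.length + 1 + 1 - 2 - 2 * (rest.length / 2) + rest.length % 2 = 0 := by
            omega
          simp [h0, hi, hi2]
        · have h0 : rest.length + 1 - (pairRev rest).length = 1 := by
            rw [pairRev_length]; omega
          have hi : rest.length - 2 * ((rest.length + 1) / 2) + (rest.length + 1) % 2 = 1 := by
            omega
          have hi2 : rest.length + 1 + 1 - 2 - 2 * ((rest.length + 1) / 2)
              + (rest.length + 1) % 2 = 1 := by omega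
          simp [h0, hi, hi2]


def blockRevFun (m a i : ℕ) : ℕ :=
  if 2 * m ≤ i ∧ i < 2 * m + 2 * a then
    2 * m + (2 * a - 2 - 2 * ((i - 2 * m) / 2) + (i - 2 * m) % 2)
  else i

theorem blockRevFun_invol (m a i : ℕ) : blockRevFun m a (blockRevFun m a i) = i := by
  simp only [blockRevFun]
  split_ifs <;> omega

theorem blockRevFun_lt {n m a i : ℕ} (h : 2 * m + 2 * a ≤ n) (hi : i < n) :
    blockRevFun m a i < n := by
  simp only [blockRevFun]; split_ifs <;> omega

def blockRevPerm (n m a : ℕ) (h : 2 * m + 2 * a ≤ n) : Equiv.Perm (Fin n) where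
  toFun i := ⟨blockRevFun m a i, blockRevFun_lt h i.2⟩
  invFun i := ⟨blockRevFun m a i, blockRevFun_lt h i.2⟩
  left_inv i := Fin.ext (blockRevFun_invol m a i)
  right_inv i := Fin.ext (blockRevFun_invol m a i)

theorem blockRevPerm_zero (n m : ℕ) (h : 2 * m + 2 * 0 ≤ n) : blockRevPerm n m 0 h = 1 := by
  apply Equiv.ext; intro i
  apply Fin.ext
  simp only [blockRevPerm, Equiv.coe_fn_mk, Equiv.Perm.coe_one, id_eq, blockRevFun]
  split_ifs <;> omega

theorem blockRevPerm_one (n m : ℕ) (h : 2 * m + 2 * 1 ≤ n) : blockRevPerm n m 1 h = 1 := by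
  apply Equiv.ext; intro i
  apply Fin.ext
  simp only [blockRevPerm, Equiv.coe_fn_mk, Equiv.Perm.coe_one, id_eq, blockRevFun]
  split_ifs <;> omega

theorem blockRevPerm_succ_succ (n m a : ℕ) (h : 2 * m + 2 * (a + 2) ≤ n) :
    blockRevPerm n m (a + 2) h =
      (Equiv.swap (⟨2 * m, by omega⟩ : Fin n) ⟨2 * m + 2 * a + 2, by omega⟩ *
       Equiv.swap (⟨2 * m + 1, by omega⟩ : Fin n) ⟨2 * m + 2 * a + 3, by omega⟩) *
        blockRevPerm n (m + 1) a (by omega) := by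
  apply Equiv.ext; intro i
  apply Fin.ext
  simp only [blockRevPerm, Equiv.Perm.mul_apply, Equiv.coe_fn_mk, Equiv.swap_apply_def,
    Fin.ext_iff, apply_ite (Fin.val), blockRevFun]
  split_ifs <;> omega

theorem sign_blockRevPerm (n m a : ℕ) (h : 2 * m + 2 * a ≤ n) :
    Equiv.Perm.sign (blockRevPerm n m a h) = 1 := by
  induction a using Nat.strong_induction_on generalizing m with
  | _ a ih =>
    match a with
    | 0 => rw [blockRevPerm_zero]; simp
    | 1 => rw [blockRevPerm_one]; simp
    | (a + 2) =>
        rw [blockRevPerm_succ_succ n m a h]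
        rw [map_mul, map_mul, ih a (by omega) (m + 1) (by omega)]
        rw [Equiv.Perm.sign_swap (by simp [Fin.ext_iff]; omega),
          Equiv.Perm.sign_swap (by simp [Fin.ext_iff]; omega)]
        simp


theorem ofFn_blockRevPerm {n m a : ℕ} (h : 2 * m + 2 * a ≤ n) (u : Fin n → V) :
    List.ofFn (fun i => u (blockRevPerm n m a h i)) =
      (List.ofFn u).take (2 * m) ++ pairRev (((List.ofFn u).drop (2 * m)).take (2 * a))
        ++ (List.ofFn u).drop (2 * m + 2 * a) := by
  have hmidlen : (((List.ofFn u).drop (2 * m)).take (2 * a)).length = 2 * a := by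
    simp only [List.length_take, List.length_drop, List.length_ofFn]; omega
  apply List.ext_getElem
  · simp only [List.length_ofFn, List.length_append, List.length_take, pairRev_length,
      List.length_drop, hmidlen]
    omega
  · intro j h1 h2
    rw [List.getElem_ofFn]
    rw [List.getElem_append]
    simp only [List.length_append, List.length_take, pairRev_length, List.length_drop,
      List.length_ofFn, hmidlen] at h2 ⊢
    split_ifs with hc1
    · rw [List.getElem_append]
      simp only [List.length_take, List.length_ofFn] at hc1 ⊢
      split_ifs with hc2
      · rw [List.getElem_take, List.getElem_ofFn]
        congr 1
        apply Fin.ext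
        simp only [blockRevPerm, Equiv.coe_fn_mk, blockRevFun]
        split_ifs <;> omega
      · rw [pairRev_getElem _ (by rw [hmidlen]; omega) _ (by rw [hmidlen]; omega)]
        rw [List.getElem_take, List.getElem_drop, List.getElem_ofFn]
        congr 1
        apply Fin.ext
        simp only [blockRevPerm, Equiv.coe_fn_mk, blockRevFun, hmidlen,
          List.length_take, List.length_drop, List.length_ofFn]
        split_ifs <;> omega
    · rw [List.getElem_drop, List.getElem_ofFn]
      congr 1
      apply Fin.ext
      simp only [blockRevPerm, Equiv.coe_fn_mk, blockRevFun]
      split_ifs <;> omega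

theorem preChernA_flip [FiniteDimensional ℝ V] (e : V ≃ₗ[ℝ] Module.Dual ℝ V)
    (Rhat : V →ₗ[ℝ] V →ₗ[ℝ] Module.End ℝ V)
    (hA : ∀ z w, Tω e (Rhat z w) = - Rhat z w)
    {q : ℕ} (l₁ l₂ : List ℕ) (a : ℕ) (hodd : Odd a)
    (h : 2 * l₁.sum + 2 * a ≤ 2 * q) (u : Fin (2 * q) → V) :
    preChernA Rhat (l₁ ++ a :: l₂)
        (List.ofFn (fun i => u (blockRevPerm (2 * q) l₁.sum a h i))) =
      - preChernA Rhat (l₁ ++ a :: l₂) (List.ofFn u) := by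
  set m := l₁.sum with hm
  set xs := List.ofFn u with hxs
  have hxl : xs.length = 2 * q := by rw [hxs, List.length_ofFn]
  have hlx : (xs.take (2 * m)).length = 2 * m := by
    rw [List.length_take, hxl]; omega
  have hlM : ((xs.drop (2 * m)).take (2 * a)).length = 2 * a := by
    simp only [List.length_take, List.length_drop, hxl]; omega
  have hlpM : (pairRev ((xs.drop (2 * m)).take (2 * a))).length = 2 * a := by
    rw [pairRev_length, hlM]
  rw [ofFn_blockRevPerm]
  rw [List.append_assoc]
  rw [preChernA_append, ← hm, List.take_left' hlx, List.drop_left' hlx]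
  simp only [preChernA]
  rw [List.take_left' hlpM, List.drop_left' hlpM]
  obtain ⟨k, hk⟩ := hodd
  rw [trace_endProdA_pairRev e Rhat hA a _ hlM]
  rw [preChernA_append, ← hm]
  simp only [preChernA]
  rw [List.drop_drop]
  have h2 : 2 * m + 2 * a = 2 * (m + a) := by omega
  have hpow : ((-1 : ℝ)) ^ a = -1 := Odd.neg_one_pow ⟨k, hk⟩
  rw [hpow, h2]
  ring

theorem exists_odd_mem : ∀ (l : List ℕ), Odd l.sum → ∃ a ∈ l, Odd a := by
  intro l
  induction l with
  | nil => intro h; simp [Nat.odd_iff] at h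
  | cons a t ih =>
      intro h
      rcases Nat.even_or_odd a with he | ho
      · have ht : Odd t.sum := by
          rw [Nat.odd_iff] at h ⊢
          rw [Nat.even_iff] at he
          simp only [List.sum_cons] at h
          omega
        obtain ⟨b, hb, hob⟩ := ih ht
        exact ⟨b, List.mem_cons_of_mem a hb, hob⟩
      · exact ⟨a, List.mem_cons_self, ho⟩


end S3

/-- for an algebraic symplectic curvature tensor R on a real symplectic
vector space (V, ω) and q odd, the Chern generator c_q(R) is the zero 2q-form;
consequently every Chern 2q-form of R (a wedge product of Chern generators with total
degree 2q, i.e. the alternatization of the block product attached to any list of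
degrees summing to q) vanishes. -/
theorem statement_3 [FiniteDimensional ℝ V]
    (ω : V →ₗ[ℝ] V →ₗ[ℝ] ℝ)
    (halt : ∀ x, ω x x = 0)
    (hnd : ∀ x, (∀ y, ω x y = 0) → x = 0)
    (R : MultilinearMap ℝ (fun _ : Fin 4 => V) ℝ)
    (hsym : ∀ v : Fin 4 → V, R (fun t => v (Equiv.swap (0 : Fin 4) 1 t)) = R v)
    (hanti : ∀ v : Fin 4 → V, R (fun t => v (Equiv.swap (2 : Fin 4) 3 t)) = - R v)
    (hbianchi : ∀ v : Fin 4 → V,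
      R v + R (fun t => v (![0, 2, 3, 1] t)) + R (fun t => v (![0, 3, 1, 2] t)) = 0)
    (Rhat : V →ₗ[ℝ] V →ₗ[ℝ] Module.End ℝ V)
    (hRhat : ∀ z w x y : V, ω (Rhat z w x) y = R ![x, y, z, w])
    (q : ℕ) (hq : Odd q) :
    (∀ v : Fin (2 * q) → V,
      ∑ σ : Equiv.Perm (Fin (2 * q)), ((Equiv.Perm.sign σ : ℤ) : ℝ) *
        preChernA Rhat [q] (List.ofFn (fun i => v (σ i))) = 0) ∧
    (∀ l : List ℕ, l.sum = q → (∀ a ∈ l, 1 ≤ a) →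
      ∀ v : Fin (2 * q) → V,
        ∑ σ : Equiv.Perm (Fin (2 * q)), ((Equiv.Perm.sign σ : ℤ) : ℝ) *
          preChernA Rhat l (List.ofFn (fun i => v (σ i))) = 0) := by
  have hskew : ∀ x y, ω x y = - ω y x := by
    intro x y
    have h := halt (x + y)
    simp only [map_add, LinearMap.add_apply, halt x, halt y] at h
    linarith
  have hswap : ∀ x y z w : V,
      (fun t => (![y, x, z, w] : Fin 4 → V) (Equiv.swap (0 : Fin 4) 1 t)) = ![x, y, z, w] := by
    intro x y z w
    funext t
    fin_cases t <;> rfl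
  have hsymR : ∀ x y z w : V, ω ((Rhat z w) x) y = ω ((Rhat z w) y) x := by
    intro x y z w
    rw [hRhat, hRhat]
    have h := hsym ![y, x, z, w]
    rw [hswap x y z w] at h
    exact h
  set e : V ≃ₗ[ℝ] Module.Dual ℝ V := LinearMap.BilinForm.toDual ω
    ((LinearMap.IsRefl.nondegenerate_iff_separatingLeft
      (fun x y h => by rw [hskew, h, neg_zero])).2 hnd) with he
  have heval : ∀ x y : V, e x y = ω x y := fun _ _ => rfl
  have hA : ∀ z w : V, S3.Tω e (Rhat z w) = - (Rhat z w) := by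
    intro z w
    apply LinearMap.ext; intro x
    apply e.injective
    have h1 : e ((S3.Tω e (Rhat z w)) x) = (e x) ∘ₗ (Rhat z w) := by
      simp [S3.Tω, LinearEquiv.conj_apply_apply, Module.Dual.transpose_apply]
    rw [h1]
    apply LinearMap.ext; intro y
    simp only [LinearMap.coe_comp, Function.comp_apply, LinearMap.neg_apply, map_neg,
      LinearMap.neg_apply]
    rw [heval, heval]
    rw [hsymR x y z w, hskew ((Rhat z w) y) x, neg_neg]
  have key : ∀ l : List ℕ, l.sum = q → ∀ v : Fin (2 * q) → V,
      (∑ σ : Equiv.Perm (Fin (2 * q)), ((Equiv.Perm.sign σ : ℤ) : ℝ) *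
        preChernA Rhat l (List.ofFn (fun i => v (σ i)))) = 0 := by
    intro l hsum v
    have hodd : Odd l.sum := hsum ▸ hq
    obtain ⟨a, hal, hao⟩ := S3.exists_odd_mem l hodd
    obtain ⟨l₁, l₂, rfl⟩ := List.append_of_mem hal
    have hbound : 2 * l₁.sum + 2 * a ≤ 2 * q := by
      rw [List.sum_append, List.sum_cons] at hsum
      omega
    set τ := S3.blockRevPerm (2 * q) l₁.sum a hbound with hτ
    have hstep : ∀ σ : Equiv.Perm (Fin (2 * q)),
        ((Equiv.Perm.sign (σ * τ) : ℤ) : ℝ) *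
          preChernA Rhat (l₁ ++ a :: l₂) (List.ofFn fun i => v ((σ * τ) i)) =
        - (((Equiv.Perm.sign σ : ℤ) : ℝ) *
          preChernA Rhat (l₁ ++ a :: l₂) (List.ofFn fun i => v (σ i))) := by
      intro σ
      have h1 : Equiv.Perm.sign (σ * τ) = Equiv.Perm.sign σ := by
        rw [map_mul, hτ, S3.sign_blockRevPerm, mul_one]
      have h2 : preChernA Rhat (l₁ ++ a :: l₂) (List.ofFn fun i => v ((σ * τ) i)) =
          - preChernA Rhat (l₁ ++ a :: l₂) (List.ofFn fun i => v (σ i)) :=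
        S3.preChernA_flip e Rhat hA l₁ l₂ a hao hbound (fun i => v (σ i))
      rw [h1, h2]
      ring
    have main : (∑ σ : Equiv.Perm (Fin (2 * q)), ((Equiv.Perm.sign σ : ℤ) : ℝ) *
        preChernA Rhat (l₁ ++ a :: l₂) (List.ofFn fun i => v (σ i))) =
        - ∑ σ : Equiv.Perm (Fin (2 * q)), ((Equiv.Perm.sign σ : ℤ) : ℝ) *
        preChernA Rhat (l₁ ++ a :: l₂) (List.ofFn fun i => v (σ i)) := by
      conv_lhs => rw [← Equiv.sum_comp (Equiv.mulRight τ)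
        (fun σ : Equiv.Perm (Fin (2 * q)) => ((Equiv.Perm.sign σ : ℤ) : ℝ) *
          preChernA Rhat (l₁ ++ a :: l₂) (List.ofFn fun i => v (σ i)))]
      rw [← Finset.sum_neg_distrib]
      refine Finset.sum_congr rfl fun σ _ => ?_
      exact hstep σ
    linarith
  constructor
  · intro v
    exact key [q] (by simp) v
  · intro l hsum _ v
    exact key l hsum v


end
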